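/- Let θ be a regular infinite cardinal and suppose there is a sequence ⟨f_ξ : ξ < θ⟩ of functions ω → ω that is ≤*-increasing (ξ < η implies f_ξ ≤* f_η and ¬(f_η ≤* f_ξ)) and ≤*-unbounded in ω^ω. Then there is a (θ,ω)-good set. -/

import Mathlib

open Cardinal Set

universe u

/-- `f ≤⁺ g`: there is `k` such that for every `α`, `f α ≤ g α` or `f α ≤ k`. -/
def LePlus {I : Type u} (f g : I → ℕ) : Prop :=
  ∃ k : ℕ, ∀ α, f α ≤ g α ∨ f α ≤ k

/-- `f ≤* g`: `f α ≤ g α` for all but finitely many `α`. -/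
def LeStar {I : Type u} (f g : I → ℕ) : Prop :=
  {α | ¬ f α ≤ g α}.Finite

/-- The trace `V_g × U_f` of a basic neighborhood of `(∞,∞)` in `F_θ × F_λ`. -/
def VU {Θ Λ : Type u} (g : Θ → ℕ) (f : Λ → ℕ) : Set ((Θ × ℕ) × (Λ × ℕ)) :=
  {p | g p.1.1 < p.1.2 ∧ f p.2.1 < p.2.2}

/-- `A` is a `(θ,ω)`-good set, where `θ = #Θ` (clauses (a)–(c)). -/
def IsGoodOmega {Θ : Type} (A : Set ((Θ × ℕ) × (ℕ × ℕ))) : Prop :=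
  (∀ (g : Θ → ℕ) (f : ℕ → ℕ), (A ∩ VU g f).Nonempty) ∧
  (∀ B ⊆ A, #B < #Θ → ∃ (g : Θ → ℕ) (f : ℕ → ℕ), B ∩ VU g f = ∅) ∧
  (∀ E : Set ℕ, E.Finite →
    ∃ (g : Θ → ℕ) (f : ℕ → ℕ), A ∩ {p | p.2.1 ∈ E} ∩ VU g f = ∅)

/-- A `≤*`-increasing, `≤*`-unbounded `θ`-sequence in `ω^ω` (for `θ` regular)
yields a `(θ,ω)`-good set. -/
theorem statement8 (θ : Cardinal.{0}) (hreg : θ.IsRegular)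
    (f : θ.ord.ToType → ℕ → ℕ)
    (hmono : ∀ ξ η : θ.ord.ToType, ξ < η →
      LeStar (f ξ) (f η) ∧ ¬ LeStar (f η) (f ξ))
    (hunb : ¬ ∃ g : ℕ → ℕ, ∀ ξ : θ.ord.ToType, LeStar (f ξ) g) :
    ∃ A : Set ((θ.ord.ToType × ℕ) × (ℕ × ℕ)), IsGoodOmega A := by
  classical
  refine ⟨{p | ∃ ξ : θ.ord.ToType, ∃ n : ℕ, p = ((ξ, n), (n, f ξ n))}, ?_, ?_, ?_⟩
  · -- (a)
    intro g h
    push_neg at hunb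
    obtain ⟨ξ, hξ⟩ := hunb h
    have hinf : {n | ¬ f ξ n ≤ h n}.Infinite := fun hfin => hξ hfin
    obtain ⟨n, hn, hgt⟩ := hinf.exists_gt (g ξ)
    exact ⟨((ξ, n), (n, f ξ n)), ⟨ξ, n, rfl⟩, hgt, not_le.1 hn⟩
  · -- (b)
    intro B hBA hB
    set S : Set θ.ord.ToType := (fun p : (θ.ord.ToType × ℕ) × (ℕ × ℕ) => p.1.1) '' B with hS
    have hScard : #S < θ := by
      refine lt_of_le_of_lt (mk_image_le) ?_
      rwa [mk_toType, card_ord] at hB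
    have hbd : Set.Bounded (· < ·) S := by
      haveI : IsWellOrder θ.ord.ToType (· < ·) := ⟨⟩
      obtain ⟨x, hx⟩ := not_isCofinal_iff.1 (fun h => (Order.cof_le h).not_gt (by rwa [Ordinal.cof_toType, hreg.cof_eq]))
      exact ⟨x, hx⟩
    obtain ⟨η, hη⟩ := hbd
    refine ⟨fun ξ =>
      if hfin : ({n | ¬ f ξ n ≤ f η n}).Finite then hfin.toFinset.sup id else 0,
      f η, ?_⟩
    ext p
    simp only [mem_inter_iff, mem_empty_iff_false, iff_false]
    rintro ⟨hpB, hp1, hp2⟩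
    obtain ⟨ξ, n, rfl⟩ := hBA hpB
    have hξη : ξ < η := hη _ ⟨_, hpB, rfl⟩
    have hfin : ({n | ¬ f ξ n ≤ f η n}).Finite := (hmono ξ η hξη).1
    simp only [VU, hfin, dif_pos] at hp1
    have : ¬ f ξ n ≤ f η n := not_le.2 hp2
    have hmem : n ∈ hfin.toFinset := hfin.mem_toFinset.2 this
    exact absurd (Finset.le_sup (f := id) hmem) (not_le.2 hp1)
  · -- (c)
    intro E hE
    obtain ⟨N, hN⟩ : ∃ N, ∀ n ∈ E, n ≤ N := by
      rcases hE.bddAbove with ⟨N, hN⟩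
      exact ⟨N, fun n hn => hN hn⟩
    refine ⟨fun _ => N, fun _ => 0, ?_⟩
    ext p
    simp only [mem_inter_iff, mem_empty_iff_false, iff_false]
    rintro ⟨⟨⟨ξ, n, rfl⟩, hnE⟩, hp1, _⟩
    exact absurd (hN n hnE) (not_le.2 hp1)
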